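/- For all α, β, γ > 0, the function b(α,β,γ) := ∂₁θ_log(β,γ)·α + ∂₂θ_log(β,γ)·β − θ_log(α,β) is nonnegative. -/

import Mathlib

open Real MeasureTheory intervalIntegral

noncomputable def thetaLog (r s : ℝ) : ℝ := ∫ p in (0:ℝ)..1, r ^ (1 - p) * s ^ p

noncomputable def dtheta1 (r s : ℝ) : ℝ := deriv (fun u : ℝ => thetaLog u s) r

noncomputable def dtheta2 (r s : ℝ) : ℝ := deriv (fun v : ℝ => thetaLog r v) s

noncomputable def bfun (a b c : ℝ) : ℝ := dtheta1 b c * a + dtheta2 b c * b - thetaLog a b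

noncomputable def b0fun (a b c : ℝ) : ℝ := dtheta1 b c * a + dtheta2 b c * b

lemma rpow_le_max {x : ℝ} (hx : 0 < x) {p : ℝ} (hp0 : 0 ≤ p) (hp1 : p ≤ 1) :
    x ^ p ≤ max 1 x := by
  rcases le_total x 1 with h | h
  · exact le_max_of_le_left (Real.rpow_le_one hx.le h hp0)
  · calc x ^ p ≤ x ^ (1:ℝ) := Real.rpow_le_rpow_of_exponent_le h hp1
    _ = x := Real.rpow_one x
    _ ≤ max 1 x := le_max_right _ _

lemma rpow_neg_le {x : ℝ} (hx : 0 < x) {p : ℝ} (hp0 : 0 ≤ p) (hp1 : p ≤ 1)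
    {y : ℝ} (hxy : y < x) (hy : 0 < y) : x ^ (-p) ≤ max 1 y⁻¹ := by
  rw [Real.rpow_neg hx.le, ← Real.inv_rpow hx.le]
  calc (x⁻¹) ^ p ≤ max 1 x⁻¹ := rpow_le_max (by positivity) hp0 hp1
    _ ≤ max 1 y⁻¹ := max_le_max le_rfl (by
        exact inv_anti₀ hy hxy.le)

lemma cont_aux {x y : ℝ} (hx : 0 < x) (hy : 0 < y) {f g : ℝ → ℝ}
    (hf : Continuous f) (hg : Continuous g) :
    Continuous fun p : ℝ => x ^ f p * y ^ g p :=
  (continuous_const.rpow hf fun _ => Or.inl hx.ne').mul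
    (continuous_const.rpow hg fun _ => Or.inl hy.ne')

lemma hasDerivAt_theta1 {r s : ℝ} (hr : 0 < r) (hs : 0 < s) :
    HasDerivAt (fun u : ℝ => thetaLog u s)
      (∫ p in (0:ℝ)..1, ((1 - p) * r ^ (1 - p - 1)) * s ^ p) r := by
  have h := intervalIntegral.hasDerivAt_integral_of_dominated_loc_of_deriv_le
    (F := fun x p => x ^ (1 - p) * s ^ p)
    (F' := fun x p => ((1 - p) * x ^ (1 - p - 1)) * s ^ p)
    (x₀ := r) (μ := volume) (a := (0:ℝ)) (b := 1) (bound := fun _ => max 1 (r / 2)⁻¹ * max 1 s)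
    (Metric.ball_mem_nhds r (half_pos hr))
    ?meas ?int ?meas' ?bound ?bint ?diff
  · exact h.2
  case meas =>
    filter_upwards [eventually_gt_nhds hr] with x hx
    exact (cont_aux hx hs (by continuity) continuous_id).aestronglyMeasurable
  case int =>
    exact (cont_aux hr hs (by continuity) continuous_id).intervalIntegrable 0 1
  case meas' =>
    exact (Continuous.mul
      ((continuous_const.sub continuous_id).mul
        (continuous_const.rpow (by continuity) fun _ => Or.inl hr.ne'))
      (continuous_const.rpow continuous_id fun _ => Or.inl hs.ne')).aestronglyMeasurable
  case bound =>
    refine MeasureTheory.ae_of_all _ fun p hp x hx => ?_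
    rw [Set.uIoc_of_le (by norm_num : (0:ℝ) ≤ 1)] at hp
    have hx0 : r / 2 < x := by
      have := abs_lt.1 (Metric.mem_ball.1 hx)
      linarith [this.1]
    have hxpos : 0 < x := lt_trans (half_pos hr) hx0
    have h1 : x ^ (1 - p - 1) = x ^ (-p) := by ring_nf
    have hbound1 : x ^ (-p) ≤ max 1 (r/2)⁻¹ :=
      rpow_neg_le hxpos hp.1.le hp.2 hx0 (half_pos hr)
    have hbound2 : s ^ p ≤ max 1 s := rpow_le_max hs hp.1.le hp.2
    have h1p : (0:ℝ) ≤ 1 - p := by linarith [hp.2]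
    rw [norm_mul, norm_mul, Real.norm_eq_abs, Real.norm_eq_abs, Real.norm_eq_abs,
      abs_of_nonneg h1p, abs_of_nonneg (Real.rpow_nonneg hxpos.le _),
      abs_of_nonneg (Real.rpow_nonneg hs.le _), h1]
    calc (1 - p) * x ^ (-p) * s ^ p ≤ 1 * (max 1 (r/2)⁻¹) * (max 1 s) := by
          apply mul_le_mul _ hbound2 (Real.rpow_nonneg hs.le _) (by positivity)
          apply mul_le_mul (by linarith [hp.1]) hbound1 (Real.rpow_nonneg hxpos.le _) zero_le_one
      _ = max 1 (r/2)⁻¹ * max 1 s := by ring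
  case bint => exact intervalIntegrable_const
  case diff =>
    refine MeasureTheory.ae_of_all _ fun p hp x hx => ?_
    have hx0 : 0 < x := by
      have := abs_lt.1 (Metric.mem_ball.1 hx)
      linarith [this.1, half_pos hr]
    exact (Real.hasDerivAt_rpow_const (Or.inl hx0.ne')).mul_const _

lemma hasDerivAt_theta2 {r s : ℝ} (hr : 0 < r) (hs : 0 < s) :
    HasDerivAt (fun v : ℝ => thetaLog r v)
      (∫ p in (0:ℝ)..1, r ^ (1 - p) * (p * s ^ (p - 1))) s := by
  have h := intervalIntegral.hasDerivAt_integral_of_dominated_loc_of_deriv_le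
    (F := fun x p => r ^ (1 - p) * x ^ p)
    (F' := fun x p => r ^ (1 - p) * (p * x ^ (p - 1)))
    (x₀ := s) (μ := volume) (a := (0:ℝ)) (b := 1) (bound := fun _ => max 1 r * max 1 (s / 2)⁻¹)
    (Metric.ball_mem_nhds s (half_pos hs))
    ?meas ?int ?meas' ?bound ?bint ?diff
  · exact h.2
  case meas =>
    filter_upwards [eventually_gt_nhds hs] with x hx
    exact (cont_aux hr hx (by continuity) continuous_id).aestronglyMeasurable
  case int =>
    exact (cont_aux hr hs (by continuity) continuous_id).intervalIntegrable 0 1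
  case meas' =>
    exact (Continuous.mul
      (continuous_const.rpow (by continuity) fun _ => Or.inl hr.ne')
      (continuous_id.mul
        (continuous_const.rpow (by continuity) fun _ => Or.inl hs.ne'))).aestronglyMeasurable
  case bound =>
    refine MeasureTheory.ae_of_all _ fun p hp x hx => ?_
    rw [Set.uIoc_of_le (by norm_num : (0:ℝ) ≤ 1)] at hp
    have hx0 : s / 2 < x := by
      have := abs_lt.1 (Metric.mem_ball.1 hx)
      linarith [this.1]
    have hxpos : 0 < x := lt_trans (half_pos hs) hx0
    have h1 : x ^ (p - 1) = x ^ (-(1 - p)) := by ring_nf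
    have h1p : (0:ℝ) ≤ 1 - p := by linarith [hp.2]
    have hbound1 : x ^ (-(1-p)) ≤ max 1 (s/2)⁻¹ :=
      rpow_neg_le hxpos h1p (by linarith [hp.1]) hx0 (half_pos hs)
    have hbound2 : r ^ (1 - p) ≤ max 1 r := rpow_le_max hr h1p (by linarith [hp.1])
    rw [norm_mul, norm_mul, Real.norm_eq_abs, Real.norm_eq_abs, Real.norm_eq_abs,
      abs_of_nonneg hp.1.le, abs_of_nonneg (Real.rpow_nonneg hxpos.le _),
      abs_of_nonneg (Real.rpow_nonneg hr.le _), h1]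
    calc r ^ (1 - p) * (p * x ^ (-(1-p))) ≤ (max 1 r) * (1 * (max 1 (s/2)⁻¹)) := by
          apply mul_le_mul hbound2 _ (mul_nonneg hp.1.le (Real.rpow_nonneg hxpos.le _)) (by positivity)
          apply mul_le_mul hp.2 hbound1 (Real.rpow_nonneg hxpos.le _) zero_le_one
      _ = max 1 r * max 1 (s/2)⁻¹ := by ring
  case bint => exact intervalIntegrable_const
  case diff =>
    refine MeasureTheory.ae_of_all _ fun p hp x hx => ?_
    have hx0 : 0 < x := by
      have := abs_lt.1 (Metric.mem_ball.1 hx)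
      linarith [this.1, half_pos hs]
    exact (Real.hasDerivAt_rpow_const (Or.inl hx0.ne')).const_mul _

lemma pointwise_key {a b c p : ℝ} (ha : 0 < a) (hb : 0 < b) (hc : 0 < c)
    (hp0 : 0 ≤ p) (hp1 : p ≤ 1) :
    a ^ (1 - p) * b ^ p ≤
      ((1 - p) * b ^ (1 - p - 1)) * c ^ p * a + (b ^ (1 - p) * (p * c ^ (p - 1))) * b := by
  set x : ℝ := b ^ (-p) * c ^ p * a with hx
  set y : ℝ := b ^ (2 - p) * c ^ (p - 1) with hy
  have hxpos : 0 < x := by positivity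
  have hypos : 0 < y := by positivity
  have hgm : x ^ (1 - p) * y ^ p ≤ (1 - p) * x + p * y :=
    Real.geom_mean_le_arith_mean2_weighted (by linarith) hp0 hxpos.le hypos.le (by ring)
  have hid : x ^ (1 - p) * y ^ p = a ^ (1 - p) * b ^ p := by
    rw [hx, hy, Real.mul_rpow (by positivity) ha.le,
      Real.mul_rpow (by positivity) (by positivity),
      Real.mul_rpow (by positivity) (by positivity),
      ← Real.rpow_mul hb.le, ← Real.rpow_mul hc.le,
      ← Real.rpow_mul hb.le, ← Real.rpow_mul hc.le]
    have e1 : -p * (1 - p) + (2 - p) * p = p := by ring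
    have e2 : p * (1 - p) + (p - 1) * p = 0 := by ring
    calc b ^ (-p * (1-p)) * c ^ (p * (1-p)) * a ^ (1-p) * (b ^ ((2-p)*p) * c ^ ((p-1)*p))
        = (b ^ (-p * (1-p)) * b ^ ((2-p)*p)) * (c ^ (p * (1-p)) * c ^ ((p-1)*p)) * a ^ (1-p) := by
          ring
      _ = b ^ p * c ^ (0:ℝ) * a ^ (1-p) := by
          rw [← Real.rpow_add hb, ← Real.rpow_add hc, e1, e2]
      _ = a ^ (1-p) * b ^ p := by rw [Real.rpow_zero]; ring
  have hrhs : (1 - p) * x + p * y =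
      ((1 - p) * b ^ (1 - p - 1)) * c ^ p * a + (b ^ (1 - p) * (p * c ^ (p - 1))) * b := by
    rw [hx, hy]
    have e3 : b ^ (1 - p - 1) = b ^ (-p) := by ring_nf
    have e4 : b ^ ((2:ℝ) - p) = b ^ (1 - p) * b := by
      rw [show (2:ℝ) - p = (1 - p) + 1 by ring, Real.rpow_add hb, Real.rpow_one]
    rw [e3, e4]; ring
  rw [← hid, ← hrhs]; exact hgm

theorem bfun_nonneg (a b c : ℝ) (ha : 0 < a) (hb : 0 < b) (hc : 0 < c) :
    0 ≤ bfun a b c := by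
  have h1 : dtheta1 b c = ∫ p in (0:ℝ)..1, ((1 - p) * b ^ (1 - p - 1)) * c ^ p :=
    (hasDerivAt_theta1 hb hc).deriv
  have h2 : dtheta2 b c = ∫ p in (0:ℝ)..1, b ^ (1 - p) * (p * c ^ (p - 1)) :=
    (hasDerivAt_theta2 hb hc).deriv
  have hcont1 : Continuous fun p : ℝ => ((1 - p) * b ^ (1 - p - 1)) * c ^ p :=
    ((continuous_const.sub continuous_id).mul
      (continuous_const.rpow (by continuity) fun _ => Or.inl hb.ne')).mul
      (continuous_const.rpow continuous_id fun _ => Or.inl hc.ne')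
  have hcont2 : Continuous fun p : ℝ => b ^ (1 - p) * (p * c ^ (p - 1)) :=
    (continuous_const.rpow (by continuity) fun _ => Or.inl hb.ne').mul
      (continuous_id.mul (continuous_const.rpow (by continuity) fun _ => Or.inl hc.ne'))
  have hcont3 : Continuous fun p : ℝ => a ^ (1 - p) * b ^ p :=
    cont_aux ha hb (by continuity) continuous_id
  have key : bfun a b c = ∫ p in (0:ℝ)..1,
      (((1 - p) * b ^ (1 - p - 1)) * c ^ p * a + (b ^ (1 - p) * (p * c ^ (p - 1))) * b
        - a ^ (1 - p) * b ^ p) := by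
    unfold bfun thetaLog
    rw [h1, h2, ← intervalIntegral.integral_mul_const, ← intervalIntegral.integral_mul_const,
      ← intervalIntegral.integral_add
        ((hcont1.mul_const a).intervalIntegrable 0 1)
        ((hcont2.mul_const b).intervalIntegrable 0 1),
      ← intervalIntegral.integral_sub
        ((show Continuous fun p : ℝ => (1 - p) * b ^ (1 - p - 1) * c ^ p * a + b ^ (1 - p) * (p * c ^ (p - 1)) * b from
          (hcont1.mul_const a).add (hcont2.mul_const b)).intervalIntegrable 0 1)
        (hcont3.intervalIntegrable 0 1)]
  rw [key]
  apply intervalIntegral.integral_nonneg (by norm_num)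
  intro p hp
  have := pointwise_key ha hb hc hp.1 hp.2
  linarith
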